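/- Let B be a real n×n matrix with det B ≥ 0 whose kernel has dimension at most 1 (equivalently, 0 has multiplicity at most 1 as an eigenvalue of the positive semidefinite square root R of Bᵀ B). Then there is exactly one Q ∈ SO(n) maximizing trace(Qᵀ B) over SO(n); equivalently, there is a unique Q ∈ SO(n) with Q R = B. -/

import Mathlib

open Matrix

namespace Stmt8Aux

open scoped MatrixOrder

variable {n : ℕ}

/-- basic vecMulVec algebra -/
lemma mul_vecMulVec (A : Matrix (Fin n) (Fin n) ℝ) (u v : Fin n → ℝ) :
    A * vecMulVec u v = vecMulVec (A *ᵥ u) v := by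
  ext i j
  simp [mul_apply, vecMulVec_apply, mulVec, dotProduct, Finset.sum_mul, mul_assoc]

lemma vecMulVec_mul (u v : Fin n → ℝ) (A : Matrix (Fin n) (Fin n) ℝ) :
    vecMulVec u v * A = vecMulVec u (v ᵥ* A) := by
  ext i j
  simp [mul_apply, vecMulVec_apply, vecMul, dotProduct, Finset.mul_sum, mul_assoc,
    mul_left_comm, mul_comm]

lemma vecMulVec_transpose' (u v : Fin n → ℝ) :
    (vecMulVec u v)ᵀ = vecMulVec v u := by
  ext i j; simp [vecMulVec_apply, mul_comm]

lemma vecMulVec_zero_left (v : Fin n → ℝ) : vecMulVec (0 : Fin n → ℝ) v = 0 := by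
  ext i j; simp [vecMulVec_apply]

lemma vecMulVec_zero_right (v : Fin n → ℝ) : vecMulVec v (0 : Fin n → ℝ) = 0 := by
  ext i j; simp [vecMulVec_apply]

lemma vecMulVec_smul_left (c : ℝ) (u v : Fin n → ℝ) :
    vecMulVec (c • u) v = c • vecMulVec u v := by
  ext i j; simp [vecMulVec_apply, mul_assoc]

lemma vecMul_vecMulVec (w u v : Fin n → ℝ) :
    w ᵥ* vecMulVec u v = (w ⬝ᵥ u) • v := by
  ext j; simp [vecMul, vecMulVec_apply, dotProduct, Finset.sum_mul, mul_assoc]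

/-- orthogonal matrices preserve the dot product -/
lemma orth_dot {M : Matrix (Fin n) (Fin n) ℝ} (hM : Mᵀ * M = 1) (x y : Fin n → ℝ) :
    (M *ᵥ x) ⬝ᵥ (M *ᵥ y) = x ⬝ᵥ y := by
  rw [dotProduct_mulVec, ← mulVec_transpose, mulVec_mulVec, hM, one_mulVec]

lemma dot_transpose_mul (A : Matrix (Fin n) (Fin n) ℝ) (x : Fin n → ℝ) :
    x ⬝ᵥ ((Aᵀ * A) *ᵥ x) = (A *ᵥ x) ⬝ᵥ (A *ᵥ x) := by
  rw [← mulVec_mulVec, dotProduct_mulVec, vecMul_transpose]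

/-- the two "det = ±1" facts -/
lemma det_pm_one {Q : Matrix (Fin n) (Fin n) ℝ} (hQ : Qᵀ * Q = 1) :
    Q.det = 1 ∨ Q.det = -1 := by
  have h : Q.det * Q.det = 1 := by
    have := congrArg det hQ
    rwa [det_mul, det_transpose, det_one] at this
  exact mul_self_eq_one_iff.mp h

lemma orth_mul_orth {Q : Matrix (Fin n) (Fin n) ℝ} (hQ : Qᵀ * Q = 1) : Q * Qᵀ = 1 :=
  mul_eq_one_comm.mp hQ


lemma psd_symm {R : Matrix (Fin n) (Fin n) ℝ} (hR : R.PosSemidef) : Rᵀ = R := by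
  have := hR.1
  rwa [Matrix.IsHermitian, conjTranspose_eq_transpose_of_trivial] at this

lemma psd_dot_nonneg {R : Matrix (Fin n) (Fin n) ℝ} (hR : R.PosSemidef) (x : Fin n → ℝ) :
    0 ≤ x ⬝ᵥ (R *ᵥ x) := by
  simpa using hR.dotProduct_mulVec_nonneg x

lemma psd_dot_zero {R : Matrix (Fin n) (Fin n) ℝ} (hR : R.PosSemidef) (x : Fin n → ℝ)
    (h : x ⬝ᵥ (R *ᵥ x) = 0) : R *ᵥ x = 0 := by
  have := (hR.dotProduct_mulVec_zero_iff x).mp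
  simp only [star_trivial] at this
  exact this h

/-- kernels of `R` and `B` agree -/
lemma ker_eq {B R : Matrix (Fin n) (Fin n) ℝ} (hR : R.PosSemidef) (hRR : R * R = Bᵀ * B)
    (x : Fin n → ℝ) : R *ᵥ x = 0 ↔ B *ᵥ x = 0 := by
  have h : (R *ᵥ x) ⬝ᵥ (R *ᵥ x) = (B *ᵥ x) ⬝ᵥ (B *ᵥ x) := by
    rw [← dot_transpose_mul, ← dot_transpose_mul, psd_symm hR, hRR]
  constructor
  · intro h0
    rw [h0] at h
    exact dotProduct_self_eq_zero.mp (by simpa using h.symm)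
  · intro h0
    rw [h0] at h
    exact dotProduct_self_eq_zero.mp (by simpa using h)

/-- a unit vector in the kernel spans the kernel (using `finrank ker ≤ 1`) -/
lemma ker_span {R : Matrix (Fin n) (Fin n) ℝ}
    (hker : Module.finrank ℝ (LinearMap.ker R.mulVecLin) ≤ 1)
    {u : Fin n → ℝ} (hu : R *ᵥ u = 0) (hu1 : u ⬝ᵥ u = 1)
    {x : Fin n → ℝ} (hx : R *ᵥ x = 0) : ∃ c : ℝ, x = c • u := by
  have hune : u ≠ 0 := by
    intro h; rw [h] at hu1; simp at hu1
  have hsple : (ℝ ∙ u) ≤ LinearMap.ker R.mulVecLin := by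
    rw [Submodule.span_singleton_le_iff_mem, LinearMap.mem_ker, mulVecLin_apply]
    exact hu
  have hsp : (ℝ ∙ u) = LinearMap.ker R.mulVecLin := by
    apply Submodule.eq_of_le_of_finrank_le hsple
    rw [finrank_span_singleton hune]
    exact hker
  have hxmem : x ∈ (ℝ ∙ u) := by
    rw [hsp, LinearMap.mem_ker, mulVecLin_apply]; exact hx
  obtain ⟨c, hc⟩ := Submodule.mem_span_singleton.mp hxmem
  exact ⟨c, hc.symm⟩

/-- `R + u uᵀ` is invertible when `u` is a unit kernel vector and the kernel is 1-dim. -/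
lemma S_invertible {R : Matrix (Fin n) (Fin n) ℝ} (hR : R.PosSemidef)
    (hker : Module.finrank ℝ (LinearMap.ker R.mulVecLin) ≤ 1)
    {u : Fin n → ℝ} (hu : R *ᵥ u = 0) (hu1 : u ⬝ᵥ u = 1) :
    IsUnit (R + vecMulVec u u).det := by
  rw [isUnit_iff_ne_zero]
  intro hdet0
  obtain ⟨v, hvne, hv⟩ := (Matrix.exists_mulVec_eq_zero_iff).mpr hdet0
  have hexp : v ⬝ᵥ (R *ᵥ v) + (u ⬝ᵥ v) * (u ⬝ᵥ v) = 0 := by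
    have h1 : v ⬝ᵥ ((R + vecMulVec u u) *ᵥ v) = 0 := by rw [hv]; simp
    rw [add_mulVec] at h1
    rw [← h1, dotProduct_add]
    congr 1
    have : vecMulVec u u *ᵥ v = (u ⬝ᵥ v) • u := by
      ext i
      simp only [vecMulVec_apply, mulVec, dotProduct, Pi.smul_apply, smul_eq_mul,
        Finset.mul_sum]
      rw [Finset.sum_mul]
      exact Finset.sum_congr rfl fun j _ => by ring
    rw [this]
    simp [dotProduct_smul, dotProduct_comm v u]
  have h2 : v ⬝ᵥ (R *ᵥ v) = 0 ∧ (u ⬝ᵥ v) * (u ⬝ᵥ v) = 0 := by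
    constructor
    · nlinarith [psd_dot_nonneg hR v, mul_self_nonneg (u ⬝ᵥ v)]
    · nlinarith [psd_dot_nonneg hR v, mul_self_nonneg (u ⬝ᵥ v)]
  have hvker : R *ᵥ v = 0 := psd_dot_zero hR v h2.1
  have huv : u ⬝ᵥ v = 0 := by nlinarith [h2.2]
  obtain ⟨c, rfl⟩ := ker_span hker hu hu1 hvker
  have : c = 0 := by
    have := huv
    rw [dotProduct_smul] at this
    rw [dotProduct_comm] at hu1
    simp [hu1] at this
    tauto
  exact hvne (by rw [this, zero_smul])


lemma vecMulVec_mulVec (u v w : Fin n → ℝ) :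
    vecMulVec u v *ᵥ w = (v ⬝ᵥ w) • u := by
  ext i
  simp only [vecMulVec_apply, mulVec, dotProduct, Pi.smul_apply, smul_eq_mul, Finset.sum_mul]
  exact Finset.sum_congr rfl fun j _ => by ring

lemma dot_self_nonneg (v : Fin n → ℝ) : 0 ≤ v ⬝ᵥ v :=
  Finset.sum_nonneg fun i _ => mul_self_nonneg _

lemma exists_unit_ker {A : Matrix (Fin n) (Fin n) ℝ} (hdet : A.det = 0) :
    ∃ u : Fin n → ℝ, A *ᵥ u = 0 ∧ u ⬝ᵥ u = 1 := by
  obtain ⟨v, hvne, hv⟩ := Matrix.exists_mulVec_eq_zero_iff.mpr hdet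
  have hvv : 0 < v ⬝ᵥ v :=
    lt_of_le_of_ne (dot_self_nonneg v) fun h => hvne (dotProduct_self_eq_zero.mp h.symm)
  have hs : 0 < Real.sqrt (v ⬝ᵥ v) := Real.sqrt_pos.mpr hvv
  refine ⟨(Real.sqrt (v ⬝ᵥ v))⁻¹ • v, ?_, ?_⟩
  · rw [mulVec_smul, hv, smul_zero]
  · rw [smul_dotProduct, dotProduct_smul]
    rw [← Real.mul_self_sqrt hvv.le]
    field_simp
    simp only [smul_eq_mul, Real.sqrt_sq hs.le]
    field_simp
  
lemma R_mul_S_comm {R : Matrix (Fin n) (Fin n) ℝ} (hRsym : Rᵀ = R)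
    {u : Fin n → ℝ} (hu : R *ᵥ u = 0) :
    R * (R + vecMulVec u u) = R * R ∧ (R + vecMulVec u u) * R = R * R := by
  constructor
  · rw [mul_add, mul_vecMulVec, hu, vecMulVec_zero_left, add_zero]
  · rw [add_mul, vecMulVec_mul]
    have : u ᵥ* R = 0 := by rw [← hRsym, vecMul_transpose, hu]
    rw [this, vecMulVec_zero_right, add_zero]

lemma uniq_aux {R : Matrix (Fin n) (Fin n) ℝ} (hR : R.PosSemidef)
    (hker : Module.finrank ℝ (LinearMap.ker R.mulVecLin) ≤ 1)
    {U : Matrix (Fin n) (Fin n) ℝ} (hU : Uᵀ * U = 1) (hUdet : U.det = 1)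
    (hUR : U * R = R) : U = 1 := by
  by_cases hdetR : IsUnit R.det
  · calc U = U * (R * R⁻¹) := by rw [Matrix.mul_nonsing_inv _ hdetR, mul_one]
    _ = (U * R) * R⁻¹ := by rw [mul_assoc]
    _ = R * R⁻¹ := by rw [hUR]
    _ = 1 := Matrix.mul_nonsing_inv _ hdetR
  · have hdet0 : R.det = 0 := by
      by_contra h
      exact hdetR (isUnit_iff_ne_zero.mpr h)
    obtain ⟨u, hu, hu1⟩ := exists_unit_ker hdet0
    have hRsym : Rᵀ = R := psd_symm hR
    have hRU : R * U = R := by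
      have h1 : R = Uᵀ * R := by
        calc R = (Uᵀ * U) * R := by rw [hU, one_mul]
        _ = Uᵀ * (U * R) := by rw [mul_assoc]
        _ = Uᵀ * R := by rw [hUR]
      have h2 := congrArg transpose h1
      rw [transpose_mul, transpose_transpose, hRsym] at h2
      exact h2.symm
    have hUu : R *ᵥ (U *ᵥ u) = 0 := by rw [mulVec_mulVec, hRU, hu]
    obtain ⟨c, hc⟩ := ker_span hker hu hu1 hUu
    have hc2 : c * c = 1 := by
      have h3 := orth_dot hU u u
      rw [hc, hu1, smul_dotProduct, dotProduct_smul] at h3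
      simpa [hu1] using h3
    set S := R + vecMulVec u u with hSdef
    have hS : IsUnit S.det := S_invertible hR hker hu hu1
    have hSu : S *ᵥ u = u := by
      rw [hSdef, add_mulVec, hu, vecMulVec_mulVec, hu1, one_smul, zero_add]
    have hUS : U * S = R + c • vecMulVec u u := by
      rw [hSdef, mul_add, hUR, mul_vecMulVec, hc, vecMulVec_smul_left]
    rcases mul_self_eq_one_iff.mp hc2 with hc1 | hc1
    · have : U * S = S := by rw [hUS, hc1, one_smul]
      calc U = U * S * S⁻¹ := by rw [Matrix.mul_nonsing_inv_cancel_right _ _ hS]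
      _ = S * S⁻¹ := by rw [this]
      _ = 1 := Matrix.mul_nonsing_inv _ hS
    · exfalso
      have hF1 : U * S = S + (-2 : ℝ) • vecMulVec u u := by
        rw [hUS, hc1, hSdef]
        module
      have hF2 : S * (1 + vecMulVec ((-2 : ℝ) • u) u) = S + (-2 : ℝ) • vecMulVec u u := by
        rw [mul_add, mul_one, mul_vecMulVec, mulVec_smul, hSu, vecMulVec_smul_left]
      have hF : U * S = S * (1 + vecMulVec ((-2 : ℝ) • u) u) := hF1.trans hF2.symm
      have hdetF : (1 + vecMulVec ((-2 : ℝ) • u) u).det = -1 := by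
        rw [vecMulVec_eq (Fin 1), det_one_add_replicateCol_mul_replicateRow]
        rw [dotProduct_smul, hu1]
        norm_num
      have := congrArg det hF
      rw [det_mul, det_mul, hUdet, one_mul, hdetF, mul_neg_one] at this
      rw [← sub_eq_zero, sub_neg_eq_add, ← two_mul] at this
      have := mul_eq_zero.mp this
      simp only [OfNat.ofNat_ne_zero, false_or] at this
      exact hS.ne_zero this

lemma trace_le {R M : Matrix (Fin n) (Fin n) ℝ} (hR : R.PosSemidef) (hM : Mᵀ * M = 1) :
    (M * R).trace ≤ R.trace ∧ ((M * R).trace = R.trace → M * R = R) := by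
  classical
  set T := CFC.sqrt R with hTdef
  have hTpsd : T.PosSemidef := (CFC.sqrt_nonneg R).posSemidef
  have hTsym : Tᵀ = T := psd_symm hTpsd
  have hTs : ∀ a b, T a b = T b a := by
    intro a b
    conv_lhs => rw [← hTsym]
    rfl
  have hTT : T * T = R := CFC.sqrt_mul_sqrt_self R hR.nonneg
  have e1 : (M * R).trace = ∑ j, (fun i => T i j) ⬝ᵥ (M *ᵥ fun i => T i j) := by
    rw [← hTT, ← mul_assoc, trace_mul_comm]
    simp only [Matrix.trace, Matrix.diag, mul_apply, dotProduct, mulVec]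
    refine Finset.sum_congr rfl fun j _ => Finset.sum_congr rfl fun k _ => ?_
    rw [hTs j k]
  have e2 : R.trace = ∑ j, (fun i => T i j) ⬝ᵥ (fun i => T i j) := by
    conv_lhs => rw [← hTT]
    simp only [Matrix.trace, Matrix.diag, mul_apply, dotProduct]
    refine Finset.sum_congr rfl fun j _ => Finset.sum_congr rfl fun k _ => ?_
    rw [hTs j k]
  have hpt : ∀ x : Fin n → ℝ, x ⬝ᵥ (M *ᵥ x) ≤ x ⬝ᵥ x := by
    intro x
    have h0 : 0 ≤ (M *ᵥ x - x) ⬝ᵥ (M *ᵥ x - x) := dot_self_nonneg _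
    rw [sub_dotProduct, dotProduct_sub, dotProduct_sub, orth_dot hM x x,
      dotProduct_comm (M *ᵥ x) x] at h0
    linarith
  have hpteq : ∀ x : Fin n → ℝ, x ⬝ᵥ (M *ᵥ x) = x ⬝ᵥ x → M *ᵥ x = x := by
    intro x hx
    have h0 : (M *ᵥ x - x) ⬝ᵥ (M *ᵥ x - x) = 0 := by
      rw [sub_dotProduct, dotProduct_sub, dotProduct_sub, orth_dot hM x x,
        dotProduct_comm (M *ᵥ x) x]
      linarith
    have := dotProduct_self_eq_zero.mp h0
    rwa [sub_eq_zero] at this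
  constructor
  · rw [e1, e2]
    exact Finset.sum_le_sum fun j _ => hpt _
  · intro heq
    rw [e1, e2] at heq
    have hall : ∀ j ∈ Finset.univ, (fun i => T i j) ⬝ᵥ (M *ᵥ fun i => T i j)
        = (fun i => T i j) ⬝ᵥ (fun i => T i j) := by
      intro j hj
      by_contra hne
      have hlt : (fun i => T i j) ⬝ᵥ (M *ᵥ fun i => T i j)
          < (fun i => T i j) ⬝ᵥ (fun i => T i j) := lt_of_le_of_ne (hpt _) hne
      have : ∑ j, (fun i => T i j) ⬝ᵥ (M *ᵥ fun i => T i j)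
          < ∑ j, (fun i => T i j) ⬝ᵥ (fun i => T i j) :=
        Finset.sum_lt_sum (fun j _ => hpt _) ⟨j, hj, hlt⟩
      exact absurd heq (ne_of_lt this)
    have hMT : M * T = T := by
      ext i j
      have := hpteq _ (hall j (Finset.mem_univ j))
      have h5 := congrFun this i
      simpa [mul_apply, mulVec, dotProduct] using h5
    rw [← hTT, ← mul_assoc, hMT]

lemma det_flip {u : Fin n → ℝ} (hu1 : u ⬝ᵥ u = 1) :
    ((1 : Matrix (Fin n) (Fin n) ℝ) + (-2 : ℝ) • vecMulVec u u).det = -1 := by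
  rw [← vecMulVec_smul_left, vecMulVec_eq (Fin 1), det_one_add_replicateCol_mul_replicateRow]
  rw [dotProduct_smul, hu1]
  norm_num

lemma exist_aux {B R : Matrix (Fin n) (Fin n) ℝ} (hdet : 0 ≤ B.det)
    (hR : R.PosSemidef) (hRR : R * R = Bᵀ * B)
    (hker : Module.finrank ℝ (LinearMap.ker R.mulVecLin) ≤ 1) :
    ∃ Q : Matrix (Fin n) (Fin n) ℝ, (Qᵀ * Q = 1 ∧ Q.det = 1) ∧ Q * R = B := by
  have hRsym : Rᵀ = R := psd_symm hR
  have hdetRB : R.det = B.det := by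
    have h1 : R.det * R.det = B.det * B.det := by
      have := congrArg det hRR
      rwa [det_mul, det_mul, det_transpose] at this
    have h2 : 0 ≤ R.det := by
      have h3 : R.det = (CFC.sqrt R).det * (CFC.sqrt R).det := by rw [← det_mul, CFC.sqrt_mul_sqrt_self R hR.nonneg]
      rw [h3]; exact mul_self_nonneg _
    have h4 : R.det ^ 2 = B.det ^ 2 := by rw [pow_two, pow_two]; exact h1
    exact (sq_eq_sq₀ h2 hdet).mp h4
  by_cases hinv : IsUnit R.det
  · refine ⟨B * R⁻¹, ⟨?_, ?_⟩, ?_⟩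
    · rw [transpose_mul, transpose_nonsing_inv, hRsym]
      simp only [Matrix.mul_assoc]
      rw [← Matrix.mul_assoc Bᵀ B R⁻¹, ← hRR, Matrix.mul_assoc,
        Matrix.mul_nonsing_inv _ hinv, mul_one, Matrix.nonsing_inv_mul _ hinv]
    · rw [det_mul, det_nonsing_inv, ← hdetRB]
      exact Ring.mul_inverse_cancel _ hinv
    · exact Matrix.nonsing_inv_mul_cancel_right _ _ hinv
  · have hdet0 : R.det = 0 := by
      by_contra h
      exact hinv (isUnit_iff_ne_zero.mpr h)
    have hdetB0 : B.det = 0 := by rw [← hdetRB]; exact hdet0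
    obtain ⟨u, hu, hu1⟩ := exists_unit_ker hdet0
    obtain ⟨v, hv, hv1⟩ :=
      exists_unit_ker (show Bᵀ.det = 0 by rw [det_transpose]; exact hdetB0)
    have hBu : B *ᵥ u = 0 := (ker_eq hR hRR u).mp hu
    have huR : u ᵥ* R = 0 := by rw [← hRsym, vecMul_transpose, hu]
    have hvB : v ᵥ* B = 0 := by
      rw [← transpose_transpose B, vecMul_transpose, hv]
    set S := R + vecMulVec u u with hSdef
    have hS : IsUnit S.det := S_invertible hR hker hu hu1
    have hSsym : Sᵀ = S := by rw [hSdef, transpose_add, hRsym, vecMulVec_transpose']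
    set C := B + vecMulVec v u with hCdef
    have p1 : Bᵀ * vecMulVec v u = 0 := by rw [mul_vecMulVec, hv, vecMulVec_zero_left]
    have p2 : vecMulVec u v * B = 0 := by rw [vecMulVec_mul, hvB, vecMulVec_zero_right]
    have p3 : vecMulVec u v * vecMulVec v u = vecMulVec u u := by
      rw [vecMulVec_mul, vecMul_vecMulVec, hv1, one_smul]
    have p4 : R * vecMulVec u u = 0 := by rw [mul_vecMulVec, hu, vecMulVec_zero_left]
    have p5 : vecMulVec u u * R = 0 := by rw [vecMulVec_mul, huR, vecMulVec_zero_right]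
    have p6 : vecMulVec u u * vecMulVec u u = vecMulVec u u := by
      rw [vecMulVec_mul, vecMul_vecMulVec, hu1, one_smul]
    have hCC : Cᵀ * C = S * S := by
      rw [hCdef, hSdef, transpose_add, vecMulVec_transpose', add_mul, mul_add, mul_add,
        add_mul, mul_add, mul_add, p1, p2, p3, p4, p5, p6, hRR]
    set Q := C * S⁻¹ with hQdef
    have hQorth : Qᵀ * Q = 1 := by
      rw [hQdef, transpose_mul, transpose_nonsing_inv, hSsym]
      simp only [Matrix.mul_assoc]
      rw [← Matrix.mul_assoc Cᵀ C S⁻¹, hCC, Matrix.mul_assoc,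
        Matrix.mul_nonsing_inv _ hS, mul_one, Matrix.nonsing_inv_mul _ hS]
    have hRS : R * S = S * R := by
      rw [(R_mul_S_comm hRsym hu).1, (R_mul_S_comm hRsym hu).2]
    have hcomm : S⁻¹ * R = R * S⁻¹ := by
      calc S⁻¹ * R = S⁻¹ * R * (S * S⁻¹) := by rw [Matrix.mul_nonsing_inv _ hS, mul_one]
      _ = S⁻¹ * (R * S) * S⁻¹ := by simp only [Matrix.mul_assoc]
      _ = S⁻¹ * (S * R) * S⁻¹ := by rw [hRS]
      _ = (S⁻¹ * S) * (R * S⁻¹) := by simp only [Matrix.mul_assoc]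
      _ = R * S⁻¹ := by rw [Matrix.nonsing_inv_mul _ hS, one_mul]
    have hCR : C * R = B * S := by
      rw [hCdef, add_mul, vecMulVec_mul, huR, vecMulVec_zero_right, add_zero, hSdef,
        mul_add, mul_vecMulVec, hBu, vecMulVec_zero_left, add_zero]
    have hQR : Q * R = B := by
      rw [hQdef, Matrix.mul_assoc, hcomm, ← Matrix.mul_assoc, hCR,
        Matrix.mul_nonsing_inv_cancel_right _ _ hS]
    rcases det_pm_one hQorth with h1 | h1
    · exact ⟨Q, ⟨hQorth, h1⟩, hQR⟩
    · set F := (1 : Matrix (Fin n) (Fin n) ℝ) + (-2 : ℝ) • vecMulVec u u with hFdef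
      have hFsym : Fᵀ = F := by
        rw [hFdef, transpose_add, transpose_smul, transpose_one, vecMulVec_transpose']
      have hFF : F * F = 1 := by
        rw [hFdef]
        simp only [add_mul, mul_add, mul_one, one_mul, smul_mul_assoc, mul_smul_comm, p6]
        module
      have hFR : F * R = R := by
        rw [hFdef, add_mul, one_mul, smul_mul_assoc, p5, smul_zero, add_zero]
      refine ⟨Q * F, ⟨?_, ?_⟩, ?_⟩
      · rw [transpose_mul, hFsym, Matrix.mul_assoc, ← Matrix.mul_assoc Qᵀ Q F,
          hQorth, one_mul, hFF]
      · rw [det_mul, h1, det_flip hu1]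
        norm_num
      · rw [Matrix.mul_assoc, hFR, hQR]

end Stmt8Aux

theorem stmt8 {n : ℕ} (B R : Matrix (Fin n) (Fin n) ℝ) (hdet : 0 ≤ B.det)
    (hR : R.PosSemidef) (hRR : R * R = Bᵀ * B)
    (hker : Module.finrank ℝ (LinearMap.ker B.mulVecLin) ≤ 1) :
    (∃! Q : Matrix (Fin n) (Fin n) ℝ, (Qᵀ * Q = 1 ∧ Q.det = 1) ∧
        ∀ Q' : Matrix (Fin n) (Fin n) ℝ, Q'ᵀ * Q' = 1 → Q'.det = 1 →
          (Q'ᵀ * B).trace ≤ (Qᵀ * B).trace)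
    ∧ (∃! Q : Matrix (Fin n) (Fin n) ℝ, (Qᵀ * Q = 1 ∧ Q.det = 1) ∧ Q * R = B) := by
  classical
  have hkerR : Module.finrank ℝ (LinearMap.ker R.mulVecLin) ≤ 1 := by
    have hk : LinearMap.ker R.mulVecLin = LinearMap.ker B.mulVecLin := by
      ext x
      simp only [LinearMap.mem_ker, mulVecLin_apply]
      exact Stmt8Aux.ker_eq hR hRR x
    rw [hk]; exact hker
  obtain ⟨Q₀, ⟨hQ₀o, hQ₀d⟩, hQ₀R⟩ := Stmt8Aux.exist_aux hdet hR hRR hkerR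
  have huniq : ∀ Q' : Matrix (Fin n) (Fin n) ℝ,
      Q'ᵀ * Q' = 1 → Q'.det = 1 → Q' * R = B → Q' = Q₀ := by
    intro Q' ho hd hr
    have hU : (Q₀ᵀ * Q')ᵀ * (Q₀ᵀ * Q') = 1 := by
      rw [transpose_mul, transpose_transpose, Matrix.mul_assoc,
        ← Matrix.mul_assoc Q₀ Q₀ᵀ Q', Stmt8Aux.orth_mul_orth hQ₀o, one_mul, ho]
    have hUdet : (Q₀ᵀ * Q').det = 1 := by
      rw [det_mul, det_transpose, hQ₀d, hd, one_mul]
    have hUR : (Q₀ᵀ * Q') * R = R := by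
      rw [Matrix.mul_assoc, hr, ← hQ₀R, ← Matrix.mul_assoc, hQ₀o, one_mul]
    have h1 := Stmt8Aux.uniq_aux hR hkerR hU hUdet hUR
    calc Q' = (Q₀ * Q₀ᵀ) * Q' := by rw [Stmt8Aux.orth_mul_orth hQ₀o, one_mul]
    _ = Q₀ * (Q₀ᵀ * Q') := by rw [Matrix.mul_assoc]
    _ = Q₀ := by rw [h1, mul_one]
  have htr : (Q₀ᵀ * B).trace = R.trace := by
    rw [← hQ₀R, ← Matrix.mul_assoc, hQ₀o, one_mul]
  have hMgen : ∀ Q' : Matrix (Fin n) (Fin n) ℝ, Q'ᵀ * Q' = 1 →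
      (Q'ᵀ * Q₀)ᵀ * (Q'ᵀ * Q₀) = 1 := by
    intro Q' ho
    rw [transpose_mul, transpose_transpose, Matrix.mul_assoc,
      ← Matrix.mul_assoc Q' Q'ᵀ Q₀, Stmt8Aux.orth_mul_orth ho, one_mul, hQ₀o]
  have hmax : ∀ Q' : Matrix (Fin n) (Fin n) ℝ, Q'ᵀ * Q' = 1 →
      (Q'ᵀ * B).trace ≤ R.trace := by
    intro Q' ho
    have h2 := (Stmt8Aux.trace_le hR (hMgen Q' ho)).1
    rwa [Matrix.mul_assoc, hQ₀R] at h2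
  constructor
  · refine ⟨Q₀, ⟨⟨hQ₀o, hQ₀d⟩, ?_⟩, ?_⟩
    · intro Q' ho _
      rw [htr]
      exact hmax Q' ho
    · rintro Q' ⟨⟨ho, hd⟩, hmx⟩
      have h1 : (Q'ᵀ * B).trace = R.trace :=
        le_antisymm (hmax Q' ho) (htr ▸ hmx Q₀ hQ₀o hQ₀d)
      have h2 : (Q'ᵀ * Q₀) * R = R := by
        apply (Stmt8Aux.trace_le hR (hMgen Q' ho)).2
        rw [Matrix.mul_assoc, hQ₀R]
        exact h1
      have h3 : Q'ᵀ * B = R := by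
        rw [← hQ₀R, ← Matrix.mul_assoc]
        exact h2
      have h4 : Q' * R = B := by
        rw [← h3, ← Matrix.mul_assoc, Stmt8Aux.orth_mul_orth ho, one_mul]
      exact huniq Q' ho hd h4
  · exact ⟨Q₀, ⟨⟨hQ₀o, hQ₀d⟩, hQ₀R⟩, fun Q' h => huniq Q' h.1.1 h.1.2 h.2⟩
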